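/- For every integer n ≥ 0, every real q > 1, and every complex y, one has (q-1)^{n/2} · B_n(y|q) = i^n · q^{n(n-1)/2} · h_n(i·y·√(q-1)/2 | 1/q), where i is the imaginary unit. -/

import Mathlib

/-- `[n]_q = 1 + q + ⋯ + q^{n-1}`. -/
def qInt (q : ℝ) (n : ℕ) : ℝ := ∑ i ∈ Finset.range n, q ^ i

/-- The polynomials `B_n(y|q)` with complex argument:
`B_0 = 1`, `B_1 = -y`, `B_{n+2} = -q^{n+1}y·B_{n+1} + q^n·[n+1]_q·B_n`. -/
noncomputable def BqC (q : ℝ) (y : ℂ) : ℕ → ℂ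
  | 0 => 1
  | 1 => -y
  | n + 2 => -(q : ℂ) ^ (n + 1) * y * BqC q y (n + 1)
      + (q : ℂ) ^ n * (qInt q (n + 1) : ℝ) * BqC q y n

/-- The continuous `q`-Hermite polynomials `h_n(x|q)` with complex argument:
`h_0 = 1`, `h_1 = 2x`, `h_{n+2} = 2x·h_{n+1} - (1-q^{n+1})·h_n`. -/
noncomputable def chqC (q : ℝ) (x : ℂ) : ℕ → ℂ
  | 0 => 1
  | 1 => 2 * x
  | n + 2 => 2 * x * chqC q x (n + 1) - (1 - (q : ℂ) ^ (n + 1)) * chqC q x n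

/-- The triangular-number identity `(m+1)m/2 = m(m-1)/2 + m`. -/
lemma tri_succ (m : ℕ) : (m+1)*((m+1)-1)/2 = m*(m-1)/2 + m := by
  rw [← Nat.choose_two_right, ← Nat.choose_two_right]
  rw [show (2:ℕ) = 1 + 1 from rfl, Nat.choose_succ_succ]
  simp [Nat.choose_one_right, Nat.add_comm]

theorem stmt6 (n : ℕ) (q : ℝ) (hq1 : 1 < q) (y : ℂ) :
    (((q - 1) ^ ((n : ℝ) / 2) : ℝ) : ℂ) * BqC q y n
      = Complex.I ^ n * (q : ℂ) ^ (n * (n - 1) / 2) *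
        chqC (1 / q) (Complex.I * y * (Real.sqrt (q - 1) : ℂ) / 2) n := by
  have hpos : (0:ℝ) < q - 1 := by linarith
  have hq0r : (0:ℝ) < q := by linarith
  have hq0 : (q:ℂ) ≠ 0 := by exact_mod_cast hq0r.ne'
  have hsplit : ∀ m : ℕ, ((q-1) ^ (((m+1 : ℕ) : ℝ)/2) : ℝ)
      = (q-1) ^ ((m : ℝ)/2) * Real.sqrt (q-1) := by
    intro m
    have h2 : (((m+1 : ℕ)) : ℝ)/2 = (m:ℝ)/2 + (1/2 : ℝ) := by push_cast; ring
    rw [h2, Real.rpow_add hpos, ← Real.sqrt_eq_rpow]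
  induction n using Nat.twoStepInduction with
  | zero => simp [BqC, chqC]
  | one =>
    have h1 : ((1:ℕ):ℝ)/2 = (1/2:ℝ) := by norm_num
    simp only [BqC, chqC, h1, ← Real.sqrt_eq_rpow]
    norm_num
    linear_combination (-y * ((Real.sqrt (q-1) : ℝ) : ℂ)) * Complex.I_mul_I
  | more n ih0 ih1 =>
    set s : ℂ := ((Real.sqrt (q-1) : ℝ) : ℂ) with hs_def
    have hs : s * s = (q:ℂ) - 1 := by
      rw [hs_def, ← Complex.ofReal_mul, Real.mul_self_sqrt hpos.le]
      push_cast; ring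
    have hc2 : (((q-1) ^ (((n+2 : ℕ) : ℝ)/2) : ℝ) : ℂ)
        = (((q-1) ^ ((n : ℝ)/2) : ℝ) : ℂ) * s * s := by
      rw [show ((n+2 : ℕ)) = (n+1) + 1 from rfl, hsplit, hsplit]
      push_cast; ring
    have hc1 : (((q-1) ^ (((n+1 : ℕ) : ℝ)/2) : ℝ) : ℂ)
        = (((q-1) ^ ((n : ℝ)/2) : ℝ) : ℂ) * s := by
      rw [hsplit]; push_cast; ring
    have hN : ((qInt q (n+1) : ℝ) : ℂ) * ((q:ℂ) - 1) = (q:ℂ)^(n+1) - 1 := by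
      have h : (qInt q (n+1)) * (q - 1) = q^(n+1) - 1 := geom_sum_mul (q:ℝ) (n+1)
      exact_mod_cast congrArg (Complex.ofReal) h
    have hX : (q:ℂ)^(n+1) * ((1/q : ℝ) : ℂ)^(n+1) = 1 := by
      push_cast
      rw [← mul_pow]
      field_simp
      simp
    have hE1 : (n+1)*((n+1)-1)/2 = n*(n-1)/2 + n := tri_succ n
    have hE2 : (n+2)*((n+2)-1)/2 = n*(n-1)/2 + (2*n+1) := by
      have h1 : (n+2)*((n+2)-1)/2 = (n+1)*((n+1)-1)/2 + (n+1) := tri_succ (n+1)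
      have h2 := tri_succ n
      omega
    have hP1 : (q:ℂ) ^ ((n+1)*((n+1)-1)/2)
        = (q:ℂ) ^ (n*(n-1)/2) * (q:ℂ)^n := by rw [hE1, pow_add]
    have hP2 : (q:ℂ) ^ ((n+2)*((n+2)-1)/2)
        = (q:ℂ) ^ (n*(n-1)/2) * (q:ℂ)^(2*n+1) := by rw [hE2, pow_add]
    have hI : Complex.I * Complex.I = -1 := Complex.I_mul_I
    rw [hc1, hP1] at ih1
    simp only [BqC, chqC]
    rw [hc2, hP2]
    set c : ℂ := (((q-1) ^ ((n : ℝ)/2) : ℝ) : ℂ)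
    set P0 : ℂ := (q:ℂ) ^ (n * (n-1) / 2)
    set A1 : ℂ := chqC (1/q) (Complex.I * y * s / 2) (n+1)
    set A0 : ℂ := chqC (1/q) (Complex.I * y * s / 2) n
    set X : ℂ := ((1/q : ℝ) : ℂ)^(n+1)
    set N : ℂ := ((qInt q (n+1) : ℝ) : ℂ)
    set B1 : ℂ := BqC q y (n+1)
    set B0 : ℂ := BqC q y n
    linear_combination
      (-(q:ℂ)^(n+1) * y * s) * ih1
      + (-(Complex.I^n) * (q:ℂ)^n * (q:ℂ)^n * (q:ℂ) * y * s * P0 * Complex.I * A1) * hI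
      + (c * (q:ℂ)^n * N * B0) * hs
      + (c * (q:ℂ)^n * B0) * hN
      + ((q:ℂ)^n * ((q:ℂ)^(n+1) - 1)) * ih0
      + (-(Complex.I^n) * Complex.I * Complex.I * P0 * (q:ℂ)^n * A0) * hX
      + (Complex.I^n * P0 * A0 * (q:ℂ)^n * ((q:ℂ)^(n+1) - 1)) * hI
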